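/- Suppose at most T clients out of N collude (T ≤ N - 2) and the remaining honest clients' masked values (y_u = m_u + G(k_u) with G(k_u) replaced by independent uniform values, the masks constrained only by their known sum) are observed. Then the conditional distribution of any single honest client's input m_u given the adversary's view is the same as its prior conditional distribution given only Σ_{honest} m_u; i.e., the view determines the honest inputs only up to their sum. -/
import Mathlib

lemma map_equiv_uniform {α : Type} [Fintype α] [Nonempty α] [DecidableEq α] (e : α ≃ α) :
    PMF.map e (PMF.uniformOfFintype α) = PMF.uniformOfFintype α := by
  ext x
  rw [PMF.map_apply, PMF.uniformOfFintype_apply]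
  rw [tsum_eq_single (e.symm x) (by
    intro b hb
    simp only [PMF.uniformOfFintype_apply]
    rw [if_neg]
    intro hxe
    exact hb (by simp [hxe]))]
  simp

theorem idealized_privacy_up_to_sum {G : Type} [AddCommGroup G] [Fintype G] [DecidableEq G]
    (N T h : ℕ) (hT : T ≤ N - 2) (hhonest : h + 1 = N - T) (hh : 1 ≤ h)
    (zk : G) (m m' : Fin (h + 1) → G) (hsum : ∑ i, m i = ∑ i, m' i) :
    let mask : (Fin h → G) → Fin (h + 1) → G :=
      fun P => Fin.snoc P (zk - ∑ i : Fin h, P i)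
    let view : (Fin (h + 1) → G) → (Fin h → G) → (Fin (h + 1) → G) × G × G :=
      fun mm P => (fun u => mm u + mask P u, zk, ∑ i, mm i)
    PMF.map (view m) (PMF.uniformOfFintype (Fin h → G))
      = PMF.map (view m') (PMF.uniformOfFintype (Fin h → G)) := by
  intro mask view
  set c : Fin h → G := fun i => m i.castSucc - m' i.castSucc with hc
  let e : (Fin h → G) ≃ (Fin h → G) := Equiv.addRight c
  have key : view m = view m' ∘ e := by
    funext P
    simp only [view, Function.comp, e, Equiv.coe_addRight]
    refine Prod.ext ?_ (Prod.ext rfl hsum)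
    funext u
    simp only [mask]
    refine Fin.lastCases ?_ (fun i => ?_) u
    · simp only [Fin.snoc_last]
      have h1 : ∑ i : Fin h, (P + c) i = ∑ i : Fin h, P i + ∑ i : Fin h, c i := by
        simp [Finset.sum_add_distrib]
      have h2 : ∑ i : Fin h, c i = m' (Fin.last h) - m (Fin.last h) := by
        have hm : ∑ i, m i = ∑ i : Fin h, m i.castSucc + m (Fin.last h) :=
          (Fin.sum_univ_castSucc m)
        have hm' : ∑ i, m' i = ∑ i : Fin h, m' i.castSucc + m' (Fin.last h) :=
          (Fin.sum_univ_castSucc m')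
        simp only [hc, Finset.sum_sub_distrib]
        have := hsum
        rw [hm, hm'] at this
        linear_combination (norm := abel) this
      rw [h1, h2]
      abel
    · simp only [Fin.snoc_castSucc, Pi.add_apply, hc]
      abel
  rw [key, ← PMF.map_comp, map_equiv_uniform]
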